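/- SM-AP energy identity: with w' = w + X A (e − γ), one has ‖w_o − w'‖² + ẽᵀ A ẽ = ‖w_o − w‖² + nᵀ A n − 2 γᵀ A n + γᵀ A γ. -/

import Mathlib

open Matrix

lemma euclid_norm_sq_dot {m : ℕ} (x : EuclideanSpace ℝ (Fin m)) :
    ‖x‖ ^ 2 = (x : Fin m → ℝ) ⬝ᵥ (x : Fin m → ℝ) := by
  rw [← real_inner_self_eq_norm_sq, PiLp.inner_apply]
  simp [dotProduct, RCLike.inner_apply, mul_comm]
  exact Finset.sum_congr rfl (fun i _ => sq _)

/-- the SM-AP energy identity. -/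
theorem sm_ap_energy_identity (N L : ℕ)
    (X : Matrix (Fin (N + 1)) (Fin (L + 1)) ℝ) (hX : IsUnit (Xᵀ * X))
    (w_o w : EuclideanSpace ℝ (Fin (N + 1))) (n γv : Fin (L + 1) → ℝ) :
    let A : Matrix (Fin (L + 1)) (Fin (L + 1)) ℝ := (Xᵀ * X)⁻¹
    let d : Fin (L + 1) → ℝ := Xᵀ *ᵥ w_o + n
    let e : Fin (L + 1) → ℝ := d - Xᵀ *ᵥ w
    let et : Fin (L + 1) → ℝ := Xᵀ *ᵥ (w_o - w)
    let w' : EuclideanSpace ℝ (Fin (N + 1)) :=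
      w + (EuclideanSpace.equiv (Fin (N + 1)) ℝ).symm (X *ᵥ (A *ᵥ (e - γv)))
    ‖w_o - w'‖ ^ 2 + et ⬝ᵥ A *ᵥ et =
      ‖w_o - w‖ ^ 2 + n ⬝ᵥ A *ᵥ n - 2 * (γv ⬝ᵥ A *ᵥ n) + γv ⬝ᵥ A *ᵥ γv := by
  intro A d e et w'
  set M := Xᵀ * X with hM
  have hdet : IsUnit M.det := (Matrix.isUnit_iff_isUnit_det M).mp hX
  have hAM : A * M = 1 := Matrix.nonsing_inv_mul M hdet
  have hMA : M * A = 1 := Matrix.mul_nonsing_inv M hdet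
  have hAT : Aᵀ = A := by
    rw [show A = M⁻¹ from rfl, Matrix.transpose_nonsing_inv]
    congr 1
    rw [hM, Matrix.transpose_mul, Matrix.transpose_transpose]
  have hsym : ∀ u v : Fin (L + 1) → ℝ, u ⬝ᵥ A *ᵥ v = v ⬝ᵥ A *ᵥ u := by
    intro u v
    rw [Matrix.dotProduct_mulVec, ← Matrix.mulVec_transpose, hAT, dotProduct_comm]
  rw [euclid_norm_sq_dot, euclid_norm_sq_dot]
  set s : Fin (L + 1) → ℝ := e - γv with hs
  set q : Fin (N + 1) → ℝ := fun i => w_o i - w i with hq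
  have h1 : w_o - w = q := rfl
  have h2 : w_o - w' = q - X *ᵥ (A *ᵥ s) := by
    funext i
    show w_o i - (w i + (X *ᵥ (A *ᵥ s)) i) = (w_o i - w i) - (X *ᵥ (A *ᵥ s)) i
    ring
  have hXq : Xᵀ *ᵥ q = et := rfl
  have hsval : s = et + n - γv := by
    rw [hs]
    show Xᵀ *ᵥ w_o + n - Xᵀ *ᵥ w - γv = _
    have het : et = Xᵀ *ᵥ w_o - Xᵀ *ᵥ w := by
      show Xᵀ *ᵥ (w_o - w) = _
      rw [Matrix.mulVec_sub]
    rw [het]; abel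
  have hcross : q ⬝ᵥ (X *ᵥ (A *ᵥ s)) = et ⬝ᵥ A *ᵥ s := by
    rw [Matrix.dotProduct_mulVec, ← Matrix.mulVec_transpose, hXq]
  have hquad : (X *ᵥ (A *ᵥ s)) ⬝ᵥ (X *ᵥ (A *ᵥ s)) = s ⬝ᵥ A *ᵥ s := by
    rw [Matrix.dotProduct_mulVec, ← Matrix.mulVec_transpose,
        Matrix.mulVec_mulVec, Matrix.mulVec_mulVec, ← hM, hMA, Matrix.one_mulVec]
  rw [WithLp.ofLp_sub, WithLp.ofLp_sub, h1, h2, sub_dotProduct, dotProduct_sub, dotProduct_sub,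
      dotProduct_comm (X *ᵥ (A *ᵥ s)) q, hcross, hquad, hsval]
  simp only [Matrix.mulVec_add, Matrix.mulVec_sub, dotProduct_add,
    dotProduct_sub, add_dotProduct, sub_dotProduct]
  rw [hsym n et, hsym γv et, hsym n γv]
  ring
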